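/- For integers n ≥ 1 and k > 3, the map ρ defined on nodes by ρ(a_i) = a'_{i mod nk} and ρ(b_i) = b'_{i mod k} (where a'_j, b'_j denote the vertices of Star_{n,k} and a_i, b_i those of Star_{n,2k}), extended to cells by taking images of node sets, is a CC covering of the triangular lift 3-CL(Star_{n,k}) by the triangular lift 3-CL(Star_{n,2k}). -/

import Mathlib

/-! Basic framework: combinatorial complexes, natural neighborhood functions,
CC coverings, Hasse graphs, and higher-order message-passing (HOMP) models. -/

namespace TDL

/-- The raw data of a combinatorial complex over an ambient node type `S`:
a set of cells (finite, nonempty subsets of nodes) and a rank function. -/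
structure PreCC (S : Type*) where
  cells : Set (Finset S)
  rk : Finset S → ℕ

/-- A (featureless) combinatorial complex.  The node set is implicitly the set of
elements appearing in cells; every singleton of such a node is a cell of rank `0`,
cells are nonempty, there are finitely many cells, and the rank function is
monotone with respect to inclusion. -/
structure CC (S : Type*) extends PreCC S where
  cells_finite : cells.Finite
  nonempty_of_mem : ∀ x ∈ cells, x.Nonempty
  singleton_mem : ∀ x ∈ cells, ∀ s ∈ x, ({s} : Finset S) ∈ cells
  rk_singleton : ∀ s : S, ({s} : Finset S) ∈ cells → rk {s} = 0
  rk_mono : ∀ x ∈ cells, ∀ y ∈ cells, x ⊆ y → rk x ≤ rk y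

/-- Names of the natural neighborhood functions: `(r₁,r₂)`-adjacency,
coadjacency, incidence and co-incidence. -/
inductive NbhdKind : Type
  | adj (r₁ r₂ : ℕ)
  | coadj (r₁ r₂ : ℕ)
  | inc (r₁ r₂ : ℕ)
  | coinc (r₁ r₂ : ℕ)
  deriving DecidableEq

/-- The two ranks mentioned by a neighborhood kind are bounded by `ℓ`. -/
def NbhdKind.bounded (ℓ : ℕ) : NbhdKind → Prop
  | .adj r₁ r₂ => r₁ ≤ ℓ ∧ r₂ ≤ ℓ
  | .coadj r₁ r₂ => r₁ ≤ ℓ ∧ r₂ ≤ ℓ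
  | .inc r₁ r₂ => r₁ ≤ ℓ ∧ r₂ ≤ ℓ
  | .coinc r₁ r₂ => r₁ ≤ ℓ ∧ r₂ ≤ ℓ

namespace PreCC

variable {S : Type*}

/-- The `r`-skeleton: the set of cells of rank `r`. -/
def skel (X : PreCC S) (r : ℕ) : Set (Finset S) := {x | x ∈ X.cells ∧ X.rk x = r}

/-- The natural neighborhood functions of a complex. -/
def nbhd (X : PreCC S) : NbhdKind → Finset S → Set (Finset S)
  | .adj r₁ r₂, x => {y | x ∈ X.skel r₁ ∧ y ∈ X.skel r₁ ∧ ∃ z ∈ X.skel r₂, x ⊆ z ∧ y ⊆ z}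
  | .coadj r₁ r₂, x => {y | x ∈ X.skel r₁ ∧ y ∈ X.skel r₁ ∧ ∃ z ∈ X.skel r₂, z ⊆ x ∧ z ⊆ y}
  | .inc r₁ r₂, x => {y | x ∈ X.skel r₁ ∧ y ∈ X.skel r₂ ∧ x ⊆ y}
  | .coinc r₁ r₂, x => {y | x ∈ X.skel r₁ ∧ y ∈ X.skel r₂ ∧ y ⊆ x}

/-- The Hasse graph of a complex: vertices are cells, and `x, y` are joined by an
edge whenever `x ⊆ y` and `rk x = rk y - 1` (or symmetrically). -/
def hasse (X : PreCC S) : SimpleGraph {x : Finset S // x ∈ X.cells} where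
  Adj a b := (a.1 ⊆ b.1 ∧ X.rk a.1 + 1 = X.rk b.1) ∨ (b.1 ⊆ a.1 ∧ X.rk b.1 + 1 = X.rk a.1)
  symm := by
    constructor
    rintro a b (h | h)
    · exact Or.inr h
    · exact Or.inl h
  loopless := by
    constructor
    rintro a (⟨-, h⟩ | ⟨-, h⟩) <;> omega

end PreCC

/-- `ρ` is a CC covering of `X` by `Xt`: it maps cells of `Xt` to cells of `X`
surjectively, preserves ranks, and is a local isomorphism with respect to every
natural neighborhood function. -/
structure IsCovering {S' S : Type*} (Xt : PreCC S') (X : PreCC S)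
    (ρ : Finset S' → Finset S) : Prop where
  mem : ∀ x' ∈ Xt.cells, ρ x' ∈ X.cells
  surj : ∀ x ∈ X.cells, ∃ x' ∈ Xt.cells, ρ x' = x
  rank : ∀ x' ∈ Xt.cells, X.rk (ρ x') = Xt.rk x'
  locBij : ∀ x' ∈ Xt.cells, ∀ N : NbhdKind, Set.BijOn ρ (Xt.nbhd N x') (X.nbhd N (ρ x'))

open Classical in
/-- The multiset underlying a finite set (junk value `0` for infinite sets). -/
noncomputable def setMultiset {α : Type*} (s : Set α) : Multiset α :=
  if h : s.Finite then h.toFinset.val else 0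

/-- A higher-order message-passing (HOMP) model over a feature space `D`, for
featureless complexes of dimension at most `ℓ`: a number of layers `T`, an initial
constant feature, and, per layer, message functions (per neighborhood function and
rank), permutation-invariant aggregations (functions of multisets), a combination
operator over the family of neighborhood functions with ranks at most `ℓ`,
activations, and a readout defined on multisets. -/
structure HOMP (D : Type*) (ℓ : ℕ) where
  T : ℕ
  init : D
  msg : ℕ → NbhdKind → ℕ → D → D → D
  agg : ℕ → NbhdKind → Multiset D → D
  comb : ℕ → ({N : NbhdKind // N.bounded ℓ} → D) → D
  act : ℕ → D → D
  readout : Multiset D → D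

namespace HOMP

variable {D : Type*} {ℓ : ℕ} {S : Type*}

/-- The cell feature maps computed by a HOMP model on a complex:
`h⁰_x` is the initial constant, and
`h^{t+1}_x = β_t (⊗_N (⊕ {{ m_{t,N,rk x}(h^t_x, h^t_y) : y ∈ N(x) }}))`. -/
noncomputable def feat (M : HOMP D ℓ) (X : PreCC S) : ℕ → Finset S → D
  | 0, _ => M.init
  | t + 1, x =>
      M.act t <| M.comb t fun N =>
        M.agg t N.1 <|
          (setMultiset (X.nbhd N.1 x)).map fun y =>
            M.msg t N.1 (X.rk x) (M.feat X t x) (M.feat X t y)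

/-- The output of a HOMP model: the readout of the multiset of final features. -/
noncomputable def out (M : HOMP D ℓ) (X : PreCC S) : D :=
  M.readout <| (setMultiset X.cells).map fun x => M.feat X M.T x

end HOMP

end TDL

namespace TDL

/-- The adjacency relation of the star graph `Star_{n,k}`: vertices are
`a_i` (`i ∈ ℤ/nk`, left summand) and `b_i` (`i ∈ ℤ/k`, right summand);
`a_i ∼ a_j` iff `i − j ≡ ±1 (mod nk)`, and `b_i ∼ a_{n·i}, a_{n·i+1}`. -/
def starAdj (n k : ℕ) : ZMod (n * k) ⊕ ZMod k → ZMod (n * k) ⊕ ZMod k → Prop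
  | .inl i, .inl j => i ≠ j ∧ (i - j = 1 ∨ j - i = 1)
  | .inl j, .inr i => j = ((n * i.val : ℕ) : ZMod (n * k)) ∨
      j = ((n * i.val + 1 : ℕ) : ZMod (n * k))
  | .inr i, .inl j => j = ((n * i.val : ℕ) : ZMod (n * k)) ∨
      j = ((n * i.val + 1 : ℕ) : ZMod (n * k))
  | .inr _, .inr _ => False

/-- The star graph `Star_{n,k}`. -/
def starGraph (n k : ℕ) : SimpleGraph (ZMod (n * k) ⊕ ZMod k) where
  Adj := starAdj n k
  symm := by
    constructor
    rintro (i | i) (j | j) h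
    · exact ⟨h.1.symm, h.2.symm⟩
    · exact h
    · exact h
    · exact h.elim
  loopless := by
    constructor
    rintro (i | i) h
    · exact h.1 rfl
    · exact h

end TDL

namespace TDL

/-- The triangular lift `3-CL(G)` of a graph: `0`-cells are the singletons,
`1`-cells are the edges, `2`-cells are the triangles; ranks `0`, `1`, `2`. -/
def triLift {V : Type*} [DecidableEq V] (G : SimpleGraph V) : PreCC V where
  cells := {x | (∃ v, x = {v}) ∨ (∃ u v, G.Adj u v ∧ x = {u, v}) ∨ G.IsNClique 3 x}
  rk x := x.card - 1

end TDL

namespace TDL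

/-- The node map sending `a_i ↦ a'_{i mod nk}` and `b_i ↦ b'_{i mod k}` from the
vertices of `Star_{n,2k}` to those of `Star_{n,k}`. -/
def starProj (n k : ℕ) : ZMod (n * (2 * k)) ⊕ ZMod (2 * k) → ZMod (n * k) ⊕ ZMod k
  | .inl i => .inl ((i.val : ℕ) : ZMod (n * k))
  | .inr i => .inr ((i.val : ℕ) : ZMod k)

namespace StarAux

open TDL

variable {S' S : Type*}

/-- Two cells are "connected" if they have a common supercell or a common subcell. -/
def Conn (Xt : PreCC S') (x' y' : Finset S') : Prop :=
  (∃ z' ∈ Xt.cells, x' ⊆ z' ∧ y' ⊆ z') ∨ (∃ z' ∈ Xt.cells, z' ⊆ x' ∧ z' ⊆ y')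

theorem isCovering_of (Xt : PreCC S') (X : PreCC S) (ρ : Finset S' → Finset S)
    (hmem : ∀ x' ∈ Xt.cells, ρ x' ∈ X.cells)
    (hsurj : ∀ x ∈ X.cells, ∃ x' ∈ Xt.cells, ρ x' = x)
    (hrank : ∀ x' ∈ Xt.cells, X.rk (ρ x') = Xt.rk x')
    (hmono : ∀ y z : Finset S', y ⊆ z → ρ y ⊆ ρ z)
    (hup : ∀ x' ∈ Xt.cells, ∀ z ∈ X.cells, ρ x' ⊆ z → ∃ z' ∈ Xt.cells, x' ⊆ z' ∧ ρ z' = z)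
    (hdown : ∀ x' ∈ Xt.cells, ∀ z ∈ X.cells, z ⊆ ρ x' → ∃ z' ∈ Xt.cells, z' ⊆ x' ∧ ρ z' = z)
    (hinj : ∀ x' ∈ Xt.cells, ∀ y₁ ∈ Xt.cells, ∀ y₂ ∈ Xt.cells,
      Conn Xt x' y₁ → Conn Xt x' y₂ → ρ y₁ = ρ y₂ → y₁ = y₂) :
    IsCovering Xt X ρ := by
  have hskel : ∀ x' ∈ Xt.cells, ∀ r, (x' ∈ Xt.skel r ↔ ρ x' ∈ X.skel r) := by
    intro x' hx' r
    constructor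
    · rintro ⟨hc, hr⟩; exact ⟨hmem _ hx', by rw [hrank _ hx', hr]⟩
    · rintro ⟨hc, hr⟩; exact ⟨hx', by rw [← hrank _ hx', hr]⟩
  have hskel' : ∀ x' ∈ Xt.cells, ∀ r, x' ∈ Xt.skel r → ρ x' ∈ X.skel r := by
    intro x' hx' r h; exact (hskel x' hx' r).1 h
  refine ⟨hmem, hsurj, hrank, ?_⟩
  intro x' hx' N
  cases N with
  | adj r₁ r₂ =>
    by_cases hx : x' ∈ Xt.skel r₁
    · have hρx := hskel' x' hx' r₁ hx
      refine ⟨?_, ?_, ?_⟩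
      · rintro y ⟨-, hy, z, hz, hxz, hyz⟩
        exact ⟨hρx, hskel' y hy.1 r₁ hy, ρ z, hskel' z hz.1 r₂ hz, hmono _ _ hxz, hmono _ _ hyz⟩
      · rintro y₁ ⟨-, hy₁, z₁, hz₁, hxz₁, hyz₁⟩ y₂ ⟨-, hy₂, z₂, hz₂, hxz₂, hyz₂⟩ h
        exact hinj x' hx' y₁ hy₁.1 y₂ hy₂.1 (Or.inl ⟨z₁, hz₁.1, hxz₁, hyz₁⟩)
          (Or.inl ⟨z₂, hz₂.1, hxz₂, hyz₂⟩) h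
      · rintro y ⟨-, hy, z, hz, hxz, hyz⟩
        obtain ⟨z', hz', hxz', hρz'⟩ := hup x' hx' z hz.1 hxz
        obtain ⟨y', hy', hy'z', hρy'⟩ := hdown z' hz' y hy.1 (hρz' ▸ hyz)
        have hz'skel : z' ∈ Xt.skel r₂ := (hskel z' hz' r₂).2 (hρz' ▸ hz)
        have hy'skel : y' ∈ Xt.skel r₁ := (hskel y' hy' r₁).2 (hρy' ▸ hy)
        exact ⟨y', ⟨hx, hy'skel, z', hz'skel, hxz', hy'z'⟩, hρy'⟩
    · have h1 : Xt.nbhd (.adj r₁ r₂) x' = ∅ := by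
        ext y; simp only [PreCC.nbhd, Set.mem_setOf_eq, Set.mem_empty_iff_false, iff_false]
        rintro ⟨h, -⟩; exact hx h
      have h2 : X.nbhd (.adj r₁ r₂) (ρ x') = ∅ := by
        ext y; simp only [PreCC.nbhd, Set.mem_setOf_eq, Set.mem_empty_iff_false, iff_false]
        rintro ⟨h, -⟩; exact hx ((hskel x' hx' r₁).2 h)
      rw [h1, h2]; exact Set.bijOn_empty _
  | coadj r₁ r₂ =>
    by_cases hx : x' ∈ Xt.skel r₁
    · have hρx := hskel' x' hx' r₁ hx
      refine ⟨?_, ?_, ?_⟩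
      · rintro y ⟨-, hy, z, hz, hzx, hzy⟩
        exact ⟨hρx, hskel' y hy.1 r₁ hy, ρ z, hskel' z hz.1 r₂ hz, hmono _ _ hzx, hmono _ _ hzy⟩
      · rintro y₁ ⟨-, hy₁, z₁, hz₁, hzx₁, hzy₁⟩ y₂ ⟨-, hy₂, z₂, hz₂, hzx₂, hzy₂⟩ h
        exact hinj x' hx' y₁ hy₁.1 y₂ hy₂.1 (Or.inr ⟨z₁, hz₁.1, hzx₁, hzy₁⟩)
          (Or.inr ⟨z₂, hz₂.1, hzx₂, hzy₂⟩) h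
      · rintro y ⟨-, hy, z, hz, hzx, hzy⟩
        obtain ⟨z', hz', hz'x, hρz'⟩ := hdown x' hx' z hz.1 hzx
        obtain ⟨y', hy', hz'y', hρy'⟩ := hup z' hz' y hy.1 (hρz' ▸ hzy)
        have hz'skel : z' ∈ Xt.skel r₂ := (hskel z' hz' r₂).2 (hρz' ▸ hz)
        have hy'skel : y' ∈ Xt.skel r₁ := (hskel y' hy' r₁).2 (hρy' ▸ hy)
        exact ⟨y', ⟨hx, hy'skel, z', hz'skel, hz'x, hz'y'⟩, hρy'⟩
    · have h1 : Xt.nbhd (.coadj r₁ r₂) x' = ∅ := by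
        ext y; simp only [PreCC.nbhd, Set.mem_setOf_eq, Set.mem_empty_iff_false, iff_false]
        rintro ⟨h, -⟩; exact hx h
      have h2 : X.nbhd (.coadj r₁ r₂) (ρ x') = ∅ := by
        ext y; simp only [PreCC.nbhd, Set.mem_setOf_eq, Set.mem_empty_iff_false, iff_false]
        rintro ⟨h, -⟩; exact hx ((hskel x' hx' r₁).2 h)
      rw [h1, h2]; exact Set.bijOn_empty _
  | inc r₁ r₂ =>
    by_cases hx : x' ∈ Xt.skel r₁
    · have hρx := hskel' x' hx' r₁ hx
      refine ⟨?_, ?_, ?_⟩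
      · rintro y ⟨-, hy, hxy⟩
        exact ⟨hρx, hskel' y hy.1 r₂ hy, hmono _ _ hxy⟩
      · rintro y₁ ⟨-, hy₁, hxy₁⟩ y₂ ⟨-, hy₂, hxy₂⟩ h
        exact hinj x' hx' y₁ hy₁.1 y₂ hy₂.1 (Or.inl ⟨y₁, hy₁.1, hxy₁, subset_rfl⟩)
          (Or.inl ⟨y₂, hy₂.1, hxy₂, subset_rfl⟩) h
      · rintro y ⟨-, hy, hxy⟩
        obtain ⟨y', hy', hxy', hρy'⟩ := hup x' hx' y hy.1 hxy
        exact ⟨y', ⟨hx, (hskel y' hy' r₂).2 (hρy' ▸ hy), hxy'⟩, hρy'⟩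
    · have h1 : Xt.nbhd (.inc r₁ r₂) x' = ∅ := by
        ext y; simp only [PreCC.nbhd, Set.mem_setOf_eq, Set.mem_empty_iff_false, iff_false]
        rintro ⟨h, -⟩; exact hx h
      have h2 : X.nbhd (.inc r₁ r₂) (ρ x') = ∅ := by
        ext y; simp only [PreCC.nbhd, Set.mem_setOf_eq, Set.mem_empty_iff_false, iff_false]
        rintro ⟨h, -⟩; exact hx ((hskel x' hx' r₁).2 h)
      rw [h1, h2]; exact Set.bijOn_empty _
  | coinc r₁ r₂ =>
    by_cases hx : x' ∈ Xt.skel r₁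
    · have hρx := hskel' x' hx' r₁ hx
      refine ⟨?_, ?_, ?_⟩
      · rintro y ⟨-, hy, hyx⟩
        exact ⟨hρx, hskel' y hy.1 r₂ hy, hmono _ _ hyx⟩
      · rintro y₁ ⟨-, hy₁, hyx₁⟩ y₂ ⟨-, hy₂, hyx₂⟩ h
        exact hinj x' hx' y₁ hy₁.1 y₂ hy₂.1 (Or.inr ⟨y₁, hy₁.1, hyx₁, subset_rfl⟩)
          (Or.inr ⟨y₂, hy₂.1, hyx₂, subset_rfl⟩) h
      · rintro y ⟨-, hy, hyx⟩
        obtain ⟨y', hy', hy'x, hρy'⟩ := hdown x' hx' y hy.1 hyx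
        exact ⟨y', ⟨hx, (hskel y' hy' r₂).2 (hρy' ▸ hy), hy'x⟩, hρy'⟩
    · have h1 : Xt.nbhd (.coinc r₁ r₂) x' = ∅ := by
        ext y; simp only [PreCC.nbhd, Set.mem_setOf_eq, Set.mem_empty_iff_false, iff_false]
        rintro ⟨h, -⟩; exact hx h
      have h2 : X.nbhd (.coinc r₁ r₂) (ρ x') = ∅ := by
        ext y; simp only [PreCC.nbhd, Set.mem_setOf_eq, Set.mem_empty_iff_false, iff_false]
        rintro ⟨h, -⟩; exact hx ((hskel x' hx' r₁).2 h)
      rw [h1, h2]; exact Set.bijOn_empty _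

end StarAux
namespace StarAux

open TDL

lemma castdown {a b : ℕ} (h : a ∣ b) (x : ℕ) : ((x % b : ℕ) : ZMod a) = (x : ZMod a) := by
  rw [ZMod.natCast_eq_natCast_iff]
  exact Int.natCast_modEq_iff.1 ((Int.natCast_modEq_iff.2 (Nat.mod_modEq x b)).of_dvd
    (by exact_mod_cast h))

lemma key_cong (n k : ℕ) (hk : 4 ≤ k) (i : ZMod (2 * k)) :
    ((n * i.val : ℕ) : ZMod (n * k)) =
      ((n * (((i.val : ℕ) : ZMod k)).val : ℕ) : ZMod (n * k)) := by
  haveI : NeZero k := ⟨by omega⟩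
  rw [ZMod.val_natCast]
  conv_lhs => rw [← Nat.div_add_mod i.val k]
  have h1 : n * (k * (i.val / k) + i.val % k) = (n * k) * (i.val / k) + n * (i.val % k) := by
    ring
  rw [h1, ZMod.natCast_eq_natCast_iff]
  simpa using (Nat.ModEq.add_right (n * (i.val % k))
    ((Nat.modEq_zero_iff_dvd).2 ⟨i.val / k, rfl⟩))

lemma psi_shift (k : ℕ) (hk : 4 ≤ k) (a q : ℕ) (hq : q ≤ 1) (m : ZMod k) (ha : (a : ZMod k) = m) :
    ((a + k * q : ℕ) : ZMod k) = m := by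
  haveI : NeZero k := ⟨by omega⟩
  push_cast
  rw [ZMod.natCast_self, ha]
  ring

lemma lift_b {n k : ℕ} (hn : 1 ≤ n) (hk : 4 ≤ k) (m : ZMod k) (j : ZMod (n * (2 * k))) (c : ℕ)
    (hc : c ≤ 1)
    (h : ((j.val : ℕ) : ZMod (n * k)) = ((n * m.val + c : ℕ) : ZMod (n * k))) :
    ∃ m' : ZMod (2 * k), ((m'.val : ℕ) : ZMod k) = m ∧
      j = ((n * m'.val + c : ℕ) : ZMod (n * (2 * k))) := by
  haveI : NeZero k := ⟨by omega⟩
  haveI : NeZero (2 * k) := ⟨by omega⟩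
  haveI : NeZero (n * k) := ⟨by positivity⟩
  haveI : NeZero (n * (2 * k)) := ⟨by positivity⟩
  have hnk : 0 < n * k := Nat.pos_of_ne_zero (NeZero.ne _)
  have ht : j.val < n * (2 * k) := ZMod.val_lt j
  have hm : m.val < k := ZMod.val_lt m
  have hmval : ((m.val : ℕ) : ZMod k) = m := ZMod.natCast_zmod_val m
  have hmod : j.val ≡ n * m.val + c [MOD n * k] := (ZMod.natCast_eq_natCast_iff _ _ _).1 h
  set t := j.val with htdef
  have hjt : j = ((t : ℕ) : ZMod (n * (2 * k))) := (ZMod.natCast_zmod_val j).symm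
  obtain ⟨q, hq2, r, hr, htqr, hrr0⟩ :
      ∃ q, q < 2 ∧ ∃ r, r < n * k ∧ t = (n * k) * q + r ∧ r = t % (n * k) := by
    refine ⟨t / (n * k), ?_, t % (n * k), Nat.mod_lt _ hnk,
      (Nat.div_add_mod t (n * k)).symm, rfl⟩
    rw [Nat.div_lt_iff_lt_mul hnk]
    have : n * (2 * k) = 2 * (n * k) := by ring
    omega
  have hble : n * m.val + c ≤ n * k := by
    have h1 : m.val + 1 ≤ k := hm
    have h2 : n * (m.val + 1) ≤ n * k := Nat.mul_le_mul_left n h1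
    nlinarith
  have hrr : r = (n * m.val + c) % (n * k) := by rw [hrr0]; exact hmod
  rcases lt_or_eq_of_le hble with hlt | heq
  · -- n * m.val + c < n * k
    have hr2 : r = n * m.val + c := by rw [hrr, Nat.mod_eq_of_lt hlt]
    have hkq : k * q ≤ k := by simpa using Nat.mul_le_mul_left k (show q ≤ 1 by omega)
    refine ⟨((m.val + k * q : ℕ) : ZMod (2 * k)), ?_, ?_⟩
    · rw [ZMod.val_natCast_of_lt (by omega), psi_shift k hk m.val q (by omega) m hmval]
    · rw [ZMod.val_natCast_of_lt (by omega : m.val + k * q < 2 * k)]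
      have : n * (m.val + k * q) + c = t := by
        rw [htqr, hr2]; ring
      rw [this]; exact hjt
  · -- n * m.val + c = n * k
    have hr0 : r = 0 := by rw [hrr, heq, Nat.mod_self]
    have hq01 : q = 0 ∨ q = 1 := by omega
    rcases hq01 with hq | hq
    · -- t = 0 : take m' with val m.val + k
      refine ⟨((m.val + k : ℕ) : ZMod (2 * k)), ?_, ?_⟩
      · rw [ZMod.val_natCast_of_lt (by omega)]
        have := psi_shift k hk m.val 1 le_rfl m hmval
        simpa using this
      · rw [ZMod.val_natCast_of_lt (by omega : m.val + k < 2 * k)]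
        have h2 : n * (m.val + k) + c = n * (2 * k) := by
          have : n * (m.val + k) + c = (n * m.val + c) + n * k := by ring
          rw [this, heq]; ring
        rw [h2, ZMod.natCast_self, hjt]
        have : t = 0 := by rw [htqr, hq, hr0]; ring
        rw [this]; simp
    · -- t = n * k : take m' with val m.val
      refine ⟨((m.val : ℕ) : ZMod (2 * k)), ?_, ?_⟩
      · rw [ZMod.val_natCast_of_lt (by omega), hmval]
      · rw [ZMod.val_natCast_of_lt (by omega : m.val < 2 * k)]
        have htv : t = n * k := by rw [htqr, hq, hr0]; ring
        have : n * m.val + c = t := by rw [htv, heq]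
        rw [this]; exact hjt

end StarAux
namespace StarAux

open TDL

lemma small_ne_zero {M d : ℕ} (hM : 4 ≤ M) (h0 : 0 < d) (h3 : d ≤ 3) :
    ((d : ℕ) : ZMod M) ≠ 0 := by
  intro h
  have := Nat.le_of_dvd h0 ((ZMod.natCast_eq_zero_iff d M).1 h)
  omega

lemma one_ne {M : ℕ} (hM : 4 ≤ M) : (1 : ZMod M) ≠ 0 := by
  have := small_ne_zero hM (d := 1) (by omega) (by omega)
  simpa using this

lemma three_ne {M : ℕ} (hM : 4 ≤ M) : (3 : ZMod M) ≠ 0 := by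
  have := small_ne_zero hM (d := 3) (by omega) (by omega)
  exact_mod_cast this

lemma starAdj_inr_inr (n k : ℕ) (i j : ZMod k) : ¬ starAdj n k (.inr i) (.inr j) :=
  fun h => h

lemma cast_val_add (n k : ℕ) (hn : 1 ≤ n) (hk : 4 ≤ k) (i j : ZMod (n * (2 * k))) :
    (((i + j).val : ℕ) : ZMod (n * k)) =
      ((i.val : ℕ) : ZMod (n * k)) + ((j.val : ℕ) : ZMod (n * k)) := by
  haveI : NeZero (n * (2 * k)) := ⟨by positivity⟩
  rw [ZMod.val_add, castdown ⟨2, by ring⟩]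
  push_cast
  ring

lemma cast_val_one (n k : ℕ) (hn : 1 ≤ n) (hk : 4 ≤ k) :
    (((1 : ZMod (n * (2 * k))).val : ℕ) : ZMod (n * k)) = 1 := by
  haveI : Fact (1 < n * (2 * k)) := ⟨by nlinarith⟩
  rw [ZMod.val_one]
  exact Nat.cast_one

/-- The projection is a graph homomorphism. -/
lemma proj_adj (n k : ℕ) (hn : 1 ≤ n) (hk : 4 ≤ k) {u v : ZMod (n * (2 * k)) ⊕ ZMod (2 * k)}
    (h : (starGraph n (2 * k)).Adj u v) :
    (starGraph n k).Adj (starProj n k u) (starProj n k v) := by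
  have h4 : 4 ≤ n * k := by nlinarith
  have h1ne : (1 : ZMod (n * k)) ≠ 0 := one_ne h4
  cases u with
  | inl i =>
    cases v with
    | inl j =>
      obtain ⟨hne, hd⟩ := h
      have key : ∀ a b : ZMod (n * (2 * k)), a - b = 1 →
          ((a.val : ℕ) : ZMod (n * k)) = ((b.val : ℕ) : ZMod (n * k)) + 1 := by
        intro a b hab
        have hab' : a = 1 + b := eq_add_of_sub_eq hab
        rw [hab', cast_val_add n k hn hk, cast_val_one n k hn hk, add_comm]
      rcases hd with hd | hd
      · have e := key i j hd
        refine ⟨fun hc => ?_, Or.inl (by rw [e]; ring)⟩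
        rw [e] at hc
        exact h1ne (by linear_combination hc)
      · have e := key j i hd
        refine ⟨fun hc => ?_, Or.inr (by rw [e]; ring)⟩
        rw [e] at hc
        exact h1ne (by linear_combination -hc)
    | inr i' =>
      rcases h with h | h
      · exact Or.inl (by rw [h, ZMod.val_natCast, castdown ⟨2, by ring⟩, key_cong n k hk i'])
      · refine Or.inr ?_
        rw [h, ZMod.val_natCast, castdown ⟨2, by ring⟩]
        have h1 : ((n * i'.val + 1 : ℕ) : ZMod (n * k)) =
            ((n * i'.val : ℕ) : ZMod (n * k)) + 1 := by push_cast; ring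
        rw [h1, key_cong n k hk i']
        push_cast
        ring
  | inr i =>
    cases v with
    | inl j =>
      rcases h with h | h
      · exact Or.inl (by rw [h, ZMod.val_natCast, castdown ⟨2, by ring⟩, key_cong n k hk i])
      · refine Or.inr ?_
        rw [h, ZMod.val_natCast, castdown ⟨2, by ring⟩]
        have h1 : ((n * i.val + 1 : ℕ) : ZMod (n * k)) =
            ((n * i.val : ℕ) : ZMod (n * k)) + 1 := by push_cast; ring
        rw [h1, key_cong n k hk i]
        push_cast
        ring
    | inr j => exact h.elim

lemma proj_surj (n k : ℕ) (hn : 1 ≤ n) (hk : 4 ≤ k) :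
    Function.Surjective (starProj n k) := by
  haveI : NeZero (n * k) := ⟨by positivity⟩
  haveI : NeZero k := ⟨by omega⟩
  intro w
  cases w with
  | inl j =>
    refine ⟨Sum.inl ((j.val : ℕ) : ZMod (n * (2 * k))), ?_⟩
    show Sum.inl _ = Sum.inl j
    rw [ZMod.val_natCast, castdown ⟨2, by ring⟩, ZMod.natCast_zmod_val]
  | inr j =>
    refine ⟨Sum.inr ((j.val : ℕ) : ZMod (2 * k)), ?_⟩
    show Sum.inr _ = Sum.inr j
    rw [ZMod.val_natCast, castdown ⟨2, by ring⟩, ZMod.natCast_zmod_val]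

end StarAux
namespace StarAux

open TDL

/-- Lifting a neighbor through the projection. -/
lemma adj_lift (n k : ℕ) (hn : 1 ≤ n) (hk : 4 ≤ k)
    (v' : ZMod (n * (2 * k)) ⊕ ZMod (2 * k)) (u : ZMod (n * k) ⊕ ZMod k)
    (h : (starGraph n k).Adj u (starProj n k v')) :
    ∃ u', starProj n k u' = u ∧ (starGraph n (2 * k)).Adj u' v' := by
  have h4 : 4 ≤ n * (2 * k) := by nlinarith
  have h1ne : (1 : ZMod (n * (2 * k))) ≠ 0 := one_ne h4
  cases v' with
  | inl i =>
    cases u with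
    | inl j' =>
      obtain ⟨hne, hd⟩ := h
      rcases hd with hd | hd
      · -- j' - ↑i.val = 1, so j' = f (i + 1)
        refine ⟨.inl (i + 1), ?_, ?_, Or.inl (by ring)⟩
        · show Sum.inl _ = Sum.inl j'
          congr 1
          rw [cast_val_add n k hn hk, cast_val_one n k hn hk]
          linear_combination -hd
        · intro hc
          exact h1ne (by linear_combination hc)
      · -- ↑i.val - j' = 1, so j' = f (i - 1)
        refine ⟨.inl (i - 1), ?_, ?_, Or.inr (by ring)⟩
        · show Sum.inl _ = Sum.inl j'
          congr 1
          have e := cast_val_add n k hn hk (i - 1) 1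
          rw [sub_add_cancel, cast_val_one n k hn hk] at e
          linear_combination hd - e
        · intro hc
          exact h1ne (by linear_combination -hc)
    | inr m =>
      rcases h with h | h
      · obtain ⟨m', hm1, hm2⟩ := lift_b hn hk m i 0 (by omega)
          (by rw [Nat.add_zero]; exact h)
        rw [Nat.add_zero] at hm2
        exact ⟨.inr m', by show Sum.inr _ = Sum.inr m; rw [hm1], Or.inl hm2⟩
      · obtain ⟨m', hm1, hm2⟩ := lift_b hn hk m i 1 (by omega) h
        exact ⟨.inr m', by show Sum.inr _ = Sum.inr m; rw [hm1], Or.inr hm2⟩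
  | inr i =>
    cases u with
    | inr m => exact h.elim
    | inl j =>
      rcases h with h | h
      · refine ⟨.inl ((n * i.val : ℕ) : ZMod (n * (2 * k))), ?_, Or.inl rfl⟩
        show Sum.inl _ = Sum.inl j
        congr 1
        rw [ZMod.val_natCast, castdown ⟨2, by ring⟩, key_cong n k hk i]
        exact h.symm
      · refine ⟨.inl ((n * i.val + 1 : ℕ) : ZMod (n * (2 * k))), ?_, Or.inr rfl⟩
        show Sum.inl _ = Sum.inl j
        congr 1
        rw [ZMod.val_natCast, castdown ⟨2, by ring⟩]
        have h1 : ((n * i.val + 1 : ℕ) : ZMod (n * k)) =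
            ((n * i.val : ℕ) : ZMod (n * k)) + 1 := by push_cast; ring
        rw [h1, key_cong n k hk i]
        have h2 : ((n * (((i.val : ℕ) : ZMod k)).val : ℕ) : ZMod (n * k)) + 1 =
            ((n * (((i.val : ℕ) : ZMod k)).val + 1 : ℕ) : ZMod (n * k)) := by push_cast; ring
        rw [h2]
        exact h.symm

/-- The triangle of the star graph attached to the `b`-vertex `m`. -/
def tri (n κ : ℕ) (m : ZMod κ) : Finset (ZMod (n * κ) ⊕ ZMod κ) :=
  {Sum.inr m, Sum.inl ((n * m.val : ℕ) : ZMod (n * κ)),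
    Sum.inl ((n * m.val + 1 : ℕ) : ZMod (n * κ))}

lemma mem_tri_inl {n κ : ℕ} {j : ZMod (n * κ)} {m : ZMod κ} :
    Sum.inl j ∈ tri n κ m ↔
      j = ((n * m.val : ℕ) : ZMod (n * κ)) ∨ j = ((n * m.val + 1 : ℕ) : ZMod (n * κ)) := by
  simp [tri]

lemma mem_tri_inr {n κ : ℕ} {i m : ZMod κ} : Sum.inr i ∈ tri n κ m ↔ i = m := by
  simp [tri]

lemma tri_a_ne {n κ : ℕ} (h4 : 4 ≤ n * κ) (m : ZMod κ) :
    ((n * m.val : ℕ) : ZMod (n * κ)) ≠ ((n * m.val + 1 : ℕ) : ZMod (n * κ)) := by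
  intro h
  apply one_ne h4
  have : ((n * m.val + 1 : ℕ) : ZMod (n * κ)) = ((n * m.val : ℕ) : ZMod (n * κ)) + 1 := by
    push_cast; ring
  rw [this] at h
  linear_combination -h

lemma tri_card {n κ : ℕ} (h4 : 4 ≤ n * κ) (m : ZMod κ) : (tri n κ m).card = 3 := by
  rw [tri, Finset.card_insert_of_notMem (by simp), Finset.card_insert_of_notMem
    (by simp only [Finset.mem_singleton]
        exact fun e => tri_a_ne h4 m (Sum.inl.inj e)), Finset.card_singleton]

lemma tri_isNClique {n κ : ℕ} (h4 : 4 ≤ n * κ) (m : ZMod κ) :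
    (starGraph n κ).IsNClique 3 (tri n κ m) := by
  constructor
  · intro a ha b hb hab
    simp only [tri, Finset.coe_insert, Set.mem_insert_iff, Finset.coe_singleton,
      Set.mem_singleton_iff] at ha hb
    rcases ha with rfl | rfl | rfl <;> rcases hb with rfl | rfl | rfl
    · exact absurd rfl hab
    · exact Or.inl rfl
    · exact Or.inr rfl
    · exact Or.inl rfl
    · exact absurd rfl hab
    · refine ⟨fun e => hab (congrArg Sum.inl e), Or.inr ?_⟩
      push_cast; ring
    · exact Or.inr rfl
    · refine ⟨fun e => hab (congrArg Sum.inl e), Or.inl ?_⟩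
      push_cast; ring
    · exact absurd rfl hab
  · exact tri_card h4 m

lemma no_aaa {M : ℕ} (h4 : 4 ≤ M) {i j l : ZMod M}
    (h1 : i - j = 1 ∨ j - i = 1) (h2 : i - l = 1 ∨ l - i = 1)
    (h3 : j - l = 1 ∨ l - j = 1) : False := by
  have e1 : (1 : ZMod M) ≠ 0 := one_ne h4
  have e3 : (3 : ZMod M) ≠ 0 := three_ne h4
  rcases h1 with h1 | h1 <;> rcases h2 with h2 | h2 <;> rcases h3 with h3 | h3
  · exact e1 (by linear_combination -h1 + h2 - h3)
  · exact e1 (by linear_combination h1 - h2 - h3)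
  · exact e3 (by linear_combination -h1 - h2 - h3)
  · exact e1 (by linear_combination -h1 - h2 + h3)
  · exact e1 (by linear_combination -h1 - h2 + h3)
  · exact e3 (by linear_combination -h1 - h2 - h3)
  · exact e1 (by linear_combination h1 - h2 - h3)
  · exact e1 (by linear_combination -h1 + h2 - h3)

/-- Classification of the triangles of a star graph. -/
lemma isNClique_eq {n κ : ℕ} (hn : 1 ≤ n) (hκ : 4 ≤ κ) {x}
    (h : (starGraph n κ).IsNClique 3 x) : ∃ m, x = tri n κ m := by
  have h4 : 4 ≤ n * κ := by nlinarith
  obtain ⟨p, q, r, hpq, hpr, hqr, hx⟩ := Finset.card_eq_three.1 h.card_eq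
  have hmemp : p ∈ x := by rw [hx]; simp
  have hmemq : q ∈ x := by rw [hx]; simp
  have hmemr : r ∈ x := by rw [hx]; simp
  have hadj1 : (starGraph n κ).Adj p q := h.isClique hmemp hmemq hpq
  have hadj2 : (starGraph n κ).Adj p r := h.isClique hmemp hmemr hpr
  have hadj3 : (starGraph n κ).Adj q r := h.isClique hmemq hmemr hqr
  subst hx
  rcases p with i | i <;> rcases q with j | j <;> rcases r with l | l
  · exact (no_aaa h4 hadj1.2 hadj2.2 hadj3.2).elim
  · -- p, q are a-vertices, r = b-vertex l
    refine ⟨l, ?_⟩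
    rcases hadj2 with h2 | h2 <;> rcases hadj3 with h3 | h3
    · exact absurd (h2.trans h3.symm) (fun e => hpq (by rw [e]))
    · subst h2; subst h3; ext a; simp [tri] <;> tauto
    · subst h2; subst h3; ext a; simp [tri] <;> tauto
    · exact absurd (h2.trans h3.symm) (fun e => hpq (by rw [e]))
  · -- p = a, q = b j, r = a
    refine ⟨j, ?_⟩
    rcases hadj1 with h1 | h1 <;> rcases hadj3 with h3 | h3
    · exact absurd (h1.trans h3.symm) (fun e => hpr (by rw [e]))
    · subst h1; subst h3; ext a; simp [tri] <;> tauto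
    · subst h1; subst h3; ext a; simp [tri] <;> tauto
    · exact absurd (h1.trans h3.symm) (fun e => hpr (by rw [e]))
  · exact hadj3.elim
  · -- p = b i, q = a, r = a
    refine ⟨i, ?_⟩
    rcases hadj1 with h1 | h1 <;> rcases hadj2 with h2 | h2
    · exact absurd (h1.trans h2.symm) (fun e => hqr (by rw [e]))
    · subst h1; subst h2; ext a; simp [tri] <;> tauto
    · subst h1; subst h2; ext a; simp [tri] <;> tauto
    · exact absurd (h1.trans h2.symm) (fun e => hqr (by rw [e]))
  · exact hadj2.elim
  · exact hadj1.elim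
  · exact hadj1.elim

end StarAux
namespace StarAux

open TDL

/-- Angular potential on the vertices of the big star graph. -/
def theta (n k : ℕ) : ZMod (n * (2 * k)) ⊕ ZMod (2 * k) → ℤ
  | .inl i => 2 * i.val
  | .inr i => 2 * n * i.val + 1

lemma scale2 {a b M : ℤ} (h : a ≡ b [ZMOD M]) : 2 * a ≡ 2 * b [ZMOD 2 * M] := by
  obtain ⟨t, ht⟩ := Int.modEq_iff_dvd.1 h
  exact Int.modEq_iff_dvd.2 ⟨t, by linarith⟩

lemma val_add_one_modeq (n k : ℕ) (hn : 1 ≤ n) (hk : 4 ≤ k) (a b : ZMod (n * (2 * k)))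
    (h : a = b + 1) : (a.val : ℤ) ≡ (b.val : ℤ) + 1 [ZMOD (n * (2 * k) : ℕ)] := by
  haveI : Fact (1 < n * (2 * k)) := ⟨by nlinarith⟩
  have : a.val = (b.val + 1) % (n * (2 * k)) := by
    rw [h, ZMod.val_add, ZMod.val_one]
  rw [this]
  have hm : ((b.val + 1) % (n * (2 * k)) : ℕ) ≡ b.val + 1 [MOD (n * (2 * k))] :=
    Nat.mod_modEq _ _
  have := Int.natCast_modEq_iff.2 hm
  exact_mod_cast this

lemma val_cast_modeq (M : ℕ) (x : ℕ) :
    (((x : ℕ) : ZMod M).val : ℤ) ≡ (x : ℤ) [ZMOD (M : ℕ)] := by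
  rcases Nat.eq_zero_or_pos M with hM | hM
  · subst hM
    simp only [ZMod.val, Nat.cast_id]
    exact Int.ModEq.refl _
  · haveI : NeZero M := ⟨by omega⟩
    rw [ZMod.val_natCast]
    exact_mod_cast Int.natCast_modEq_iff.2 (Nat.mod_modEq x M)

/-- Each step along an edge (or staying put) changes the potential by at most 2,
modulo `2 * M` where `M = n * (2 * k)`. -/
lemma adj_theta (n k : ℕ) (hn : 1 ≤ n) (hk : 4 ≤ k)
    {u v : ZMod (n * (2 * k)) ⊕ ZMod (2 * k)}
    (h : u = v ∨ (starGraph n (2 * k)).Adj u v) :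
    ∃ d : ℤ, |d| ≤ 2 ∧ theta n k u ≡ theta n k v + d [ZMOD (2 * (n * (2 * k) : ℕ))] := by
  rcases h with rfl | h
  · exact ⟨0, by norm_num, by rw [add_zero]⟩
  cases u with
  | inl i =>
    cases v with
    | inl j =>
      obtain ⟨-, hd⟩ := h
      rcases hd with hd | hd
      · refine ⟨2, by norm_num, ?_⟩
        have := scale2 (val_add_one_modeq n k hn hk i j (by linear_combination hd))
        show (2 * i.val : ℤ) ≡ 2 * j.val + 2 [ZMOD _]
        calc (2 * i.val : ℤ) ≡ 2 * ((j.val : ℤ) + 1) [ZMOD _] := this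
          _ = 2 * j.val + 2 := by ring
      · refine ⟨-2, by norm_num, ?_⟩
        have := scale2 (val_add_one_modeq n k hn hk j i (by linear_combination hd))
        show (2 * i.val : ℤ) ≡ 2 * j.val + -2 [ZMOD _]
        have h2 : (2 * j.val : ℤ) ≡ 2 * i.val + 2 [ZMOD (2 * (n * (2 * k) : ℕ))] := by
          calc (2 * j.val : ℤ) ≡ 2 * ((i.val : ℤ) + 1) [ZMOD _] := this
            _ = 2 * i.val + 2 := by ring
        calc (2 * i.val : ℤ) = (2 * i.val + 2) + -2 := by ring
          _ ≡ 2 * j.val + -2 [ZMOD _] := Int.ModEq.add_right _ h2.symm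
    | inr m =>
      have key : ∀ c : ℕ, i = ((n * m.val + c : ℕ) : ZMod (n * (2 * k))) →
          (2 * (i.val : ℤ)) ≡ (2 * n * m.val + 1) + (2 * (c : ℤ) - 1)
            [ZMOD (2 * (n * (2 * k) : ℕ))] := by
        intro c hc
        have h1 : ((i.val : ℤ)) ≡ ((n * m.val + c : ℕ) : ℤ) [ZMOD (n * (2 * k) : ℕ)] := by
          rw [hc]; exact val_cast_modeq _ _
        have h2 := scale2 h1
        calc (2 * (i.val : ℤ)) ≡ 2 * ((n * m.val + c : ℕ) : ℤ) [ZMOD _] := h2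
          _ = (2 * n * m.val + 1) + (2 * (c : ℤ) - 1) := by push_cast; ring
      rcases h with hc | hc
      · refine ⟨-1, by norm_num, ?_⟩
        have h0 := key 0 (by rw [Nat.add_zero]; exact hc)
        have e : (2 * ((0 : ℕ) : ℤ) - 1) = -1 := by norm_num
        rw [e] at h0
        exact h0
      · refine ⟨1, by norm_num, ?_⟩
        have h0 := key 1 hc
        have e : (2 * ((1 : ℕ) : ℤ) - 1) = 1 := by norm_num
        rw [e] at h0
        exact h0
  | inr m =>
    cases v with
    | inl j =>
      have key : ∀ c : ℕ, j = ((n * m.val + c : ℕ) : ZMod (n * (2 * k))) →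
          ((2 * n * m.val + 1 : ℤ)) ≡ (2 * (j.val : ℤ)) + (1 - 2 * (c : ℤ))
            [ZMOD (2 * (n * (2 * k) : ℕ))] := by
        intro c hc
        have h1 : ((j.val : ℤ)) ≡ ((n * m.val + c : ℕ) : ℤ) [ZMOD (n * (2 * k) : ℕ)] := by
          rw [hc]; exact val_cast_modeq _ _
        have h2 := (scale2 h1).symm
        calc (2 * n * m.val + 1 : ℤ)
            = 2 * ((n * m.val + c : ℕ) : ℤ) + (1 - 2 * (c : ℤ)) := by push_cast; ring
          _ ≡ 2 * (j.val : ℤ) + (1 - 2 * (c : ℤ)) [ZMOD _] := Int.ModEq.add_right _ h2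
      rcases h with hc | hc
      · refine ⟨1, by norm_num, ?_⟩
        have h0 := key 0 (by rw [Nat.add_zero]; exact hc)
        have e : ((1 : ℤ) - 2 * ((0 : ℕ) : ℤ)) = 1 := by norm_num
        rw [e] at h0
        exact h0
      · refine ⟨-1, by norm_num, ?_⟩
        have h0 := key 1 hc
        have e : ((1 : ℤ) - 2 * ((1 : ℕ) : ℤ)) = -1 := by norm_num
        rw [e] at h0
        exact h0
    | inr m' => exact h.elim

/-- Vertices with the same projection are either equal or "antipodal". -/
lemma fiber_theta (n k : ℕ) (hn : 1 ≤ n) (hk : 4 ≤ k)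
    {u v : ZMod (n * (2 * k)) ⊕ ZMod (2 * k)}
    (h : starProj n k u = starProj n k v) :
    u = v ∨ theta n k u ≡ theta n k v + (n * (2 * k) : ℕ) [ZMOD (2 * (n * (2 * k) : ℕ))] := by
  haveI : NeZero (n * (2 * k)) := ⟨by positivity⟩
  haveI : NeZero (2 * k) := ⟨by omega⟩
  cases u with
  | inl i =>
    cases v with
    | inl j =>
      have h' : ((i.val : ℕ) : ZMod (n * k)) = ((j.val : ℕ) : ZMod (n * k)) :=
        Sum.inl.inj h
      have hmod : (i.val : ℤ) ≡ (j.val : ℤ) [ZMOD (n * k : ℕ)] :=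
        Int.natCast_modEq_iff.2 ((ZMod.natCast_eq_natCast_iff _ _ _).1 h')
      obtain ⟨d, hd⟩ := Int.modEq_iff_dvd.1 hmod
      push_cast at hd
      have hiv : (i.val : ℤ) < 2 * ((n : ℤ) * k) := by
        have h1 := ZMod.val_lt i
        have h2 : (i.val : ℤ) < ((n * (2 * k) : ℕ) : ℤ) := by exact_mod_cast h1
        push_cast at h2
        linarith
      have hjv : (j.val : ℤ) < 2 * ((n : ℤ) * k) := by
        have h1 := ZMod.val_lt j
        have h2 : (j.val : ℤ) < ((n * (2 * k) : ℕ) : ℤ) := by exact_mod_cast h1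
        push_cast at h2
        linarith
      have hiv0 : (0:ℤ) ≤ (i.val : ℤ) := by positivity
      have hjv0 : (0:ℤ) ≤ (j.val : ℤ) := by positivity
      have hnk : (0:ℤ) < (n : ℤ) * k := by
        exact_mod_cast Nat.mul_pos (by omega) (by omega)
      have hd' : d = -1 ∨ d = 0 ∨ d = 1 := by
        rcases lt_trichotomy d 0 with hlt | heq | hgt
        · left; by_contra hne
          have h2 : d ≤ -2 := by omega
          have h3 := mul_le_mul_of_nonneg_left h2 hnk.le
          nlinarith
        · right; left; exact heq
        · right; right; by_contra hne
          have h2 : 2 ≤ d := by omega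
          have h3 := mul_le_mul_of_nonneg_left h2 hnk.le
          nlinarith
      rcases hd' with rfl | rfl | rfl
      · right
        show (2 * i.val : ℤ) ≡ 2 * j.val + (n * (2 * k) : ℕ) [ZMOD _]
        refine Int.modEq_iff_dvd.2 ⟨0, ?_⟩
        push_cast
        linear_combination 2 * hd
      · left
        have : i.val = j.val := by omega
        rw [ZMod.val_injective _ this]
      · right
        show (2 * i.val : ℤ) ≡ 2 * j.val + (n * (2 * k) : ℕ) [ZMOD _]
        refine Int.modEq_iff_dvd.2 ⟨1, ?_⟩
        push_cast
        linear_combination 2 * hd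
    | inr j => exact absurd h (by simp [starProj])
  | inr i =>
    cases v with
    | inl j => exact absurd h (by simp [starProj])
    | inr j =>
      have h' : ((i.val : ℕ) : ZMod k) = ((j.val : ℕ) : ZMod k) := Sum.inr.inj h
      have hmod : (i.val : ℤ) ≡ (j.val : ℤ) [ZMOD (k : ℕ)] :=
        Int.natCast_modEq_iff.2 ((ZMod.natCast_eq_natCast_iff _ _ _).1 h')
      obtain ⟨d, hd⟩ := Int.modEq_iff_dvd.1 hmod
      have hiv : (i.val : ℤ) < 2 * k := by exact_mod_cast ZMod.val_lt i
      have hjv : (j.val : ℤ) < 2 * k := by exact_mod_cast ZMod.val_lt j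
      have hiv0 : (0:ℤ) ≤ (i.val : ℤ) := by positivity
      have hjv0 : (0:ℤ) ≤ (j.val : ℤ) := by positivity
      have hk0 : (0:ℤ) < (k : ℤ) := by exact_mod_cast (by omega : 0 < k)
      have hd' : d = -1 ∨ d = 0 ∨ d = 1 := by
        rcases lt_trichotomy d 0 with hlt | heq | hgt
        · left; by_contra hne
          have h2 : d ≤ -2 := by omega
          have h3 := mul_le_mul_of_nonneg_left h2 hk0.le
          nlinarith
        · right; left; exact heq
        · right; right; by_contra hne
          have h2 : 2 ≤ d := by omega
          have h3 := mul_le_mul_of_nonneg_left h2 hk0.le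
          nlinarith
      rcases hd' with rfl | rfl | rfl
      · right
        show (2 * n * i.val + 1 : ℤ) ≡ (2 * n * j.val + 1) + (n * (2 * k) : ℕ) [ZMOD _]
        refine Int.modEq_iff_dvd.2 ⟨0, ?_⟩
        push_cast
        linear_combination 2 * (n : ℤ) * hd
      · left
        have : i.val = j.val := by omega
        rw [ZMod.val_injective _ this]
      · right
        show (2 * n * i.val + 1 : ℤ) ≡ (2 * n * j.val + 1) + (n * (2 * k) : ℕ) [ZMOD _]
        refine Int.modEq_iff_dvd.2 ⟨1, ?_⟩
        push_cast
        linear_combination 2 * (n : ℤ) * hd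

/-- Key local injectivity: two vertices at distance at most 3 with the same
projection are equal. -/
lemma three_chain (n k : ℕ) (hn : 1 ≤ n) (hk : 4 ≤ k)
    {u w₁ w₂ v : ZMod (n * (2 * k)) ⊕ ZMod (2 * k)}
    (h1 : u = w₁ ∨ (starGraph n (2 * k)).Adj u w₁)
    (h2 : w₁ = w₂ ∨ (starGraph n (2 * k)).Adj w₁ w₂)
    (h3 : w₂ = v ∨ (starGraph n (2 * k)).Adj w₂ v)
    (hf : starProj n k u = starProj n k v) : u = v := by
  by_contra hne
  have hfib := (fiber_theta n k hn hk hf).resolve_left hne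
  obtain ⟨d1, hd1, e1⟩ := adj_theta n k hn hk h1
  obtain ⟨d2, hd2, e2⟩ := adj_theta n k hn hk h2
  obtain ⟨d3, hd3, e3⟩ := adj_theta n k hn hk h3
  have e12 : theta n k u ≡ theta n k w₂ + d2 + d1 [ZMOD (2 * (n * (2 * k) : ℕ))] :=
    e1.trans (Int.ModEq.add_right d1 e2)
  have e123 : theta n k u ≡ theta n k v + d3 + d2 + d1 [ZMOD (2 * (n * (2 * k) : ℕ))] :=
    e12.trans (Int.ModEq.add_right d1 (Int.ModEq.add_right d2 e3))
  have key : ((n * (2 * k) : ℕ) : ℤ) ≡ d3 + d2 + d1 [ZMOD (2 * (n * (2 * k) : ℕ))] := by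
    have h' : theta n k v + ((n * (2 * k) : ℕ) : ℤ) ≡ theta n k v + (d3 + d2 + d1)
        [ZMOD (2 * (n * (2 * k) : ℕ))] := by
      calc theta n k v + ((n * (2 * k) : ℕ) : ℤ)
          ≡ theta n k u [ZMOD _] := hfib.symm
        _ ≡ theta n k v + d3 + d2 + d1 [ZMOD _] := e123
        _ = theta n k v + (d3 + d2 + d1) := by ring
    exact Int.ModEq.add_left_cancel' _ h'
  obtain ⟨t, ht⟩ := Int.modEq_iff_dvd.1 key
  set Mz : ℤ := ((n * (2 * k) : ℕ) : ℤ) with hMz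
  have hM : (8 : ℤ) ≤ Mz := by
    have h8 : 8 ≤ n * (2 * k) := by nlinarith
    rw [hMz]
    exact_mod_cast h8
  rw [abs_le] at hd1 hd2 hd3
  -- ht : d3 + d2 + d1 - Mz = 2 * Mz * t
  have hlt0 : d3 + d2 + d1 - Mz < 0 := by linarith
  have hgt0 : -(2 * Mz) < d3 + d2 + d1 - Mz := by linarith
  rw [ht] at hlt0 hgt0
  have hM0 : (0:ℤ) < 2 * Mz := by linarith
  have ht0 : t < 0 := by nlinarith
  have ht1 : t ≤ -1 := by omega
  have : 2 * Mz * t ≤ 2 * Mz * (-1) := mul_le_mul_of_nonneg_left ht1 hM0.le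
  nlinarith

end StarAux
namespace StarAux

open TDL

variable {V : Type*} [DecidableEq V] {G : SimpleGraph V}

lemma mem_cells {x : Finset V} :
    x ∈ (triLift G).cells ↔
      (∃ v, x = {v}) ∨ (∃ u v, G.Adj u v ∧ x = {u, v}) ∨ G.IsNClique 3 x :=
  Iff.rfl

lemma rk_eq (x : Finset V) : (triLift G).rk x = x.card - 1 := rfl

lemma cell_nonempty {x : Finset V} (hx : x ∈ (triLift G).cells) : x.Nonempty := by
  rcases hx with ⟨v, rfl⟩ | ⟨u, v, -, rfl⟩ | h3
  · exact ⟨v, Finset.mem_singleton_self v⟩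
  · exact ⟨u, by simp⟩
  · rw [← Finset.card_pos, h3.card_eq]; omega

lemma cell_card_le {x : Finset V} (hx : x ∈ (triLift G).cells) : x.card ≤ 3 := by
  rcases hx with ⟨v, rfl⟩ | ⟨u, v, -, rfl⟩ | h3
  · simp
  · exact le_trans (Finset.card_insert_le _ _) (by simp)
  · rw [h3.card_eq]

lemma cell_pair {x : Finset V} (hx : x ∈ (triLift G).cells) {u v : V}
    (hu : u ∈ x) (hv : v ∈ x) : u = v ∨ G.Adj u v := by
  by_cases he : u = v
  · exact Or.inl he
  rcases hx with ⟨w, rfl⟩ | ⟨a, b, hab, rfl⟩ | h3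
  · rw [Finset.mem_singleton] at hu hv; exact Or.inl (hu.trans hv.symm)
  · simp only [Finset.mem_insert, Finset.mem_singleton] at hu hv
    rcases hu with rfl | rfl <;> rcases hv with rfl | rfl
    · exact absurd rfl he
    · exact Or.inr hab
    · exact Or.inr hab.symm
    · exact absurd rfl he
  · exact Or.inr (h3.isClique (Finset.mem_coe.2 hu) (Finset.mem_coe.2 hv) he)

/-- The cells of a triangular lift are downward closed. -/
lemma cell_down {t s : Finset V} (ht : t ∈ (triLift G).cells) (hs : s ⊆ t)
    (hne : s.Nonempty) : s ∈ (triLift G).cells := by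
  have h1 : 1 ≤ s.card := Finset.card_pos.2 hne
  have h3 : s.card ≤ 3 := le_trans (Finset.card_le_card hs) (cell_card_le ht)
  interval_cases h : s.card
  · obtain ⟨a, rfl⟩ := Finset.card_eq_one.1 h
    exact Or.inl ⟨a, rfl⟩
  · obtain ⟨a, b, hab, rfl⟩ := Finset.card_eq_two.1 h
    have hadj := cell_pair ht (hs (by simp : a ∈ ({a, b} : Finset V))) (hs (by simp : b ∈ ({a, b} : Finset V)))
    exact Or.inr (Or.inl ⟨a, b, hadj.resolve_left hab, rfl⟩)
  · have hts : s = t := by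
      apply Finset.eq_of_subset_of_card_le hs
      have := cell_card_le ht
      omega
    rw [hts]; exact ht

end StarAux
namespace StarAux

open TDL

lemma two_ne {M : ℕ} (hM : 4 ≤ M) : (2 : ZMod M) ≠ 0 := by
  have := small_ne_zero hM (d := 2) (by omega) (by omega)
  exact_mod_cast this

lemma node_lift {n k : ℕ} (hn : 1 ≤ n) (hk : 4 ≤ k) (m : ZMod k)
    (w : ZMod (n * (2 * k)) ⊕ ZMod (2 * k)) (h : starProj n k w ∈ tri n k m) :
    ∃ m' : ZMod (2 * k), ((m'.val : ℕ) : ZMod k) = m ∧ w ∈ tri n (2 * k) m' := by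
  cases w with
  | inr i =>
    exact ⟨i, mem_tri_inr.1 h, mem_tri_inr.2 rfl⟩
  | inl j =>
    rcases mem_tri_inl.1 h with h' | h'
    · obtain ⟨m', hm1, hm2⟩ := lift_b hn hk m j 0 (by omega) (by rw [Nat.add_zero]; exact h')
      rw [Nat.add_zero] at hm2
      exact ⟨m', hm1, mem_tri_inl.2 (Or.inl hm2)⟩
    · obtain ⟨m', hm1, hm2⟩ := lift_b hn hk m j 1 (by omega) h'
      exact ⟨m', hm1, mem_tri_inl.2 (Or.inr hm2)⟩

lemma two_a_lift {n k : ℕ} (hn : 1 ≤ n) (hk : 4 ≤ k) (m : ZMod k) (i : ZMod (n * (2 * k)))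
    (h1 : ((i.val : ℕ) : ZMod (n * k)) = ((n * m.val : ℕ) : ZMod (n * k)) ∨
          ((i.val : ℕ) : ZMod (n * k)) = ((n * m.val + 1 : ℕ) : ZMod (n * k)))
    (h2 : (((i + 1).val : ℕ) : ZMod (n * k)) = ((n * m.val : ℕ) : ZMod (n * k)) ∨
          (((i + 1).val : ℕ) : ZMod (n * k)) = ((n * m.val + 1 : ℕ) : ZMod (n * k))) :
    ∃ m' : ZMod (2 * k), ((m'.val : ℕ) : ZMod k) = m ∧
      Sum.inl i ∈ tri n (2 * k) m' ∧ Sum.inl (i + 1) ∈ tri n (2 * k) m' := by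
  have h4 : 4 ≤ n * k := by nlinarith
  have hplus : (((i + 1).val : ℕ) : ZMod (n * k)) = ((i.val : ℕ) : ZMod (n * k)) + 1 := by
    rw [cast_val_add n k hn hk, cast_val_one n k hn hk]
  have hC1 : ((n * m.val + 1 : ℕ) : ZMod (n * k)) = ((n * m.val : ℕ) : ZMod (n * k)) + 1 := by
    push_cast; ring
  rcases h1 with h1 | h1
  · obtain ⟨m', hm1, hm2⟩ := lift_b hn hk m i 0 (by omega) (by rw [Nat.add_zero]; exact h1)
    rw [Nat.add_zero] at hm2
    refine ⟨m', hm1, mem_tri_inl.2 (Or.inl hm2), mem_tri_inl.2 (Or.inr ?_)⟩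
    rw [hm2]; push_cast; ring
  · exfalso
    rcases h2 with h2 | h2
    · rw [hplus, h1, hC1] at h2
      exact two_ne h4 (by linear_combination h2)
    · rw [hplus, h1] at h2
      exact one_ne h4 (by linear_combination h2)

/-- Lifting a small cell inside a triangle: a cell of the big complex whose image
is contained in a triangle of the small one fits inside a lift of that triangle. -/
lemma tri_lift {n k : ℕ} (hn : 1 ≤ n) (hk : 4 ≤ k) (m : ZMod k)
    {x' : Finset (ZMod (n * (2 * k)) ⊕ ZMod (2 * k))}
    (hx' : x' ∈ (triLift (starGraph n (2 * k))).cells)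
    (hsub : x'.image (starProj n k) ⊆ tri n k m) (hcard : x'.card ≤ 2) :
    ∃ m' : ZMod (2 * k), ((m'.val : ℕ) : ZMod k) = m ∧ x' ⊆ tri n (2 * k) m' := by
  rcases hx' with ⟨w, rfl⟩ | ⟨a, b, hab, rfl⟩ | h3
  · obtain ⟨m', hm1, hm2⟩ := node_lift hn hk m w
      (hsub (Finset.mem_image_of_mem _ (Finset.mem_singleton_self w)))
    exact ⟨m', hm1, Finset.singleton_subset_iff.2 hm2⟩
  · have hfa : starProj n k a ∈ tri n k m :=
      hsub (Finset.mem_image_of_mem _ (by simp))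
    have hfb : starProj n k b ∈ tri n k m :=
      hsub (Finset.mem_image_of_mem _ (by simp))
    cases a with
    | inr i =>
      cases b with
      | inr i' => exact hab.elim
      | inl j =>
        refine ⟨i, mem_tri_inr.1 hfa, Finset.insert_subset (mem_tri_inr.2 rfl)
          (Finset.singleton_subset_iff.2 (mem_tri_inl.2 hab))⟩
    | inl i =>
      cases b with
      | inr i' =>
        refine ⟨i', mem_tri_inr.1 hfb, Finset.insert_subset (mem_tri_inl.2 hab)
          (Finset.singleton_subset_iff.2 (mem_tri_inr.2 rfl))⟩
      | inl j =>
        obtain ⟨hne, hd⟩ := hab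
        rcases hd with hd | hd
        · have hij : i = j + 1 := by linear_combination hd
          subst hij
          obtain ⟨m', hm1, hmi, hmj⟩ :=
            two_a_lift hn hk m j (mem_tri_inl.1 hfb) (mem_tri_inl.1 hfa)
          exact ⟨m', hm1, Finset.insert_subset hmj (Finset.singleton_subset_iff.2 hmi)⟩
        · have hij : j = i + 1 := by linear_combination hd
          subst hij
          obtain ⟨m', hm1, hmi, hmj⟩ :=
            two_a_lift hn hk m i (mem_tri_inl.1 hfa) (mem_tri_inl.1 hfb)
          exact ⟨m', hm1, Finset.insert_subset hmi (Finset.singleton_subset_iff.2 hmj)⟩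
  · rw [h3.card_eq] at hcard; omega

/-- The image of a big triangle is a small triangle. -/
lemma proj_tri (n k : ℕ) (hn : 1 ≤ n) (hk : 4 ≤ k) (m : ZMod (2 * k)) :
    (tri n (2 * k) m).image (starProj n k) = tri n k ((m.val : ℕ) : ZMod k) := by
  rw [tri, Finset.image_insert, Finset.image_insert, Finset.image_singleton]
  have e2 : starProj n k (Sum.inl ((n * m.val : ℕ) : ZMod (n * (2 * k)))) =
      Sum.inl ((n * (((m.val : ℕ) : ZMod k)).val : ℕ) : ZMod (n * k)) := by
    show Sum.inl _ = Sum.inl _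
    congr 1
    rw [ZMod.val_natCast, castdown ⟨2, by ring⟩, key_cong n k hk m]
  have e3 : starProj n k (Sum.inl ((n * m.val + 1 : ℕ) : ZMod (n * (2 * k)))) =
      Sum.inl ((n * (((m.val : ℕ) : ZMod k)).val + 1 : ℕ) : ZMod (n * k)) := by
    show Sum.inl _ = Sum.inl _
    congr 1
    rw [ZMod.val_natCast, castdown ⟨2, by ring⟩]
    have hsplit : ((n * m.val + 1 : ℕ) : ZMod (n * k)) =
        ((n * m.val : ℕ) : ZMod (n * k)) + 1 := by push_cast; ring
    rw [hsplit, key_cong n k hk m]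
    push_cast
    ring
  rw [e2, e3]
  rfl

end StarAux
namespace StarAux

open TDL

variable (n k : ℕ)

lemma inj_on_cell (hn : 1 ≤ n) (hk : 4 ≤ k)
    {x' : Finset (ZMod (n * (2 * k)) ⊕ ZMod (2 * k))}
    (hx' : x' ∈ (triLift (starGraph n (2 * k))).cells) :
    ∀ u ∈ x', ∀ v ∈ x', starProj n k u = starProj n k v → u = v :=
  fun u hu v hv hf =>
    three_chain n k hn hk (Or.inl rfl) (Or.inl rfl) (cell_pair hx' hu hv) hf

lemma card_image_cell (hn : 1 ≤ n) (hk : 4 ≤ k)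
    {x' : Finset (ZMod (n * (2 * k)) ⊕ ZMod (2 * k))}
    (hx' : x' ∈ (triLift (starGraph n (2 * k))).cells) :
    (x'.image (starProj n k)).card = x'.card :=
  Finset.card_image_of_injOn (fun u hu v hv =>
    inj_on_cell n k hn hk hx' u (Finset.mem_coe.1 hu) v (Finset.mem_coe.1 hv))

lemma proj_mem (hn : 1 ≤ n) (hk : 4 ≤ k)
    {x' : Finset (ZMod (n * (2 * k)) ⊕ ZMod (2 * k))}
    (hx' : x' ∈ (triLift (starGraph n (2 * k))).cells) :
    x'.image (starProj n k) ∈ (triLift (starGraph n k)).cells := by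
  rcases hx' with ⟨v, rfl⟩ | ⟨u, v, huv, rfl⟩ | h3
  · exact Or.inl ⟨starProj n k v, by rw [Finset.image_singleton]⟩
  · exact Or.inr (Or.inl ⟨starProj n k u, starProj n k v, proj_adj n k hn hk huv,
      by rw [Finset.image_insert, Finset.image_singleton]⟩)
  · obtain ⟨m, rfl⟩ := isNClique_eq hn (by omega : 4 ≤ 2 * k) h3
    rw [proj_tri n k hn hk m]
    exact Or.inr (Or.inr (tri_isNClique (by nlinarith) _))

lemma proj_rank (hn : 1 ≤ n) (hk : 4 ≤ k)
    {x' : Finset (ZMod (n * (2 * k)) ⊕ ZMod (2 * k))}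
    (hx' : x' ∈ (triLift (starGraph n (2 * k))).cells) :
    (triLift (starGraph n k)).rk (x'.image (starProj n k)) =
      (triLift (starGraph n (2 * k))).rk x' := by
  rw [rk_eq, rk_eq, card_image_cell n k hn hk hx']

lemma proj_surj_cells (hn : 1 ≤ n) (hk : 4 ≤ k)
    {x : Finset (ZMod (n * k) ⊕ ZMod k)} (hx : x ∈ (triLift (starGraph n k)).cells) :
    ∃ x' ∈ (triLift (starGraph n (2 * k))).cells, x'.image (starProj n k) = x := by
  rcases hx with ⟨v, rfl⟩ | ⟨u, v, huv, rfl⟩ | h3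
  · obtain ⟨v', hv'⟩ := proj_surj n k hn hk v
    exact ⟨{v'}, Or.inl ⟨v', rfl⟩, by rw [Finset.image_singleton, hv']⟩
  · obtain ⟨u', hu'⟩ := proj_surj n k hn hk u
    obtain ⟨v'', hfv'', hadj⟩ := adj_lift n k hn hk u' v (by rw [hu']; exact huv.symm)
    refine ⟨{u', v''}, Or.inr (Or.inl ⟨u', v'', hadj.symm, rfl⟩), ?_⟩
    rw [Finset.image_insert, Finset.image_singleton, hu', hfv'']
  · obtain ⟨m, rfl⟩ := isNClique_eq hn hk h3
    haveI : NeZero k := ⟨by omega⟩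
    refine ⟨tri n (2 * k) ((m.val : ℕ) : ZMod (2 * k)),
      Or.inr (Or.inr (tri_isNClique (by nlinarith) _)), ?_⟩
    rw [proj_tri n k hn hk]
    congr 1
    rw [ZMod.val_natCast_of_lt (by have := ZMod.val_lt m; omega), ZMod.natCast_zmod_val]

lemma proj_up (hn : 1 ≤ n) (hk : 4 ≤ k)
    {x' : Finset (ZMod (n * (2 * k)) ⊕ ZMod (2 * k))}
    (hx' : x' ∈ (triLift (starGraph n (2 * k))).cells)
    {z : Finset (ZMod (n * k) ⊕ ZMod k)} (hz : z ∈ (triLift (starGraph n k)).cells)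
    (hsub : x'.image (starProj n k) ⊆ z) :
    ∃ z' ∈ (triLift (starGraph n (2 * k))).cells, x' ⊆ z' ∧
      z'.image (starProj n k) = z := by
  have h4s : 4 ≤ n * k := by nlinarith
  have h4b : 4 ≤ n * (2 * k) := by nlinarith
  have hcard : (x'.image (starProj n k)).card = x'.card := card_image_cell n k hn hk hx'
  have hne : (x'.image (starProj n k)).Nonempty := (cell_nonempty hx').image _
  have hpos : 0 < x'.card := Finset.card_pos.2 (cell_nonempty hx')
  rcases hz with ⟨v, rfl⟩ | ⟨u, v, huv, rfl⟩ | h3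
  · rcases Finset.subset_singleton_iff.1 hsub with he | he
    · exact absurd he (Finset.nonempty_iff_ne_empty.1 hne)
    · exact ⟨x', hx', subset_rfl, he⟩
  · have hz2 : ({u, v} : Finset (ZMod (n * k) ⊕ ZMod k)).card = 2 :=
      Finset.card_pair huv.ne
    by_cases hc1 : x'.card = 1
    · obtain ⟨w, rfl⟩ := Finset.card_eq_one.1 hc1
      have hfw : starProj n k w ∈ ({u, v} : Finset (ZMod (n * k) ⊕ ZMod k)) :=
        hsub (by simp)
      have helper : ∀ (a b : ZMod (n * k) ⊕ ZMod k), (starGraph n k).Adj a b →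
          starProj n k w = a →
          ∃ z' ∈ (triLift (starGraph n (2 * k))).cells, ({w} : Finset _) ⊆ z' ∧
            z'.image (starProj n k) = {a, b} := by
        intro a b hab hfwa
        obtain ⟨v'', hfv'', hadj⟩ := adj_lift n k hn hk w b (by rw [hfwa]; exact hab.symm)
        refine ⟨{w, v''}, Or.inr (Or.inl ⟨w, v'', hadj.symm, rfl⟩), by simp, ?_⟩
        rw [Finset.image_insert, Finset.image_singleton, hfwa, hfv'']
      rcases Finset.mem_insert.1 hfw with he | he
      · exact helper u v huv he
      · obtain ⟨z', h1, h2, h3'⟩ := helper v u huv.symm (Finset.mem_singleton.1 he)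
        exact ⟨z', h1, h2, by rw [h3', Finset.pair_comm]⟩
    · have hx2 : x'.card ≤ 2 := by
        rw [← hcard]
        exact le_trans (Finset.card_le_card hsub) hz2.le
      have heq := Finset.eq_of_subset_of_card_le hsub (by rw [hz2, hcard]; omega)
      exact ⟨x', hx', subset_rfl, heq⟩
  · obtain ⟨m, rfl⟩ := isNClique_eq hn hk h3
    by_cases hc3 : x'.card = 3
    · have heq := Finset.eq_of_subset_of_card_le hsub
        (by rw [tri_card h4s m, hcard, hc3])
      exact ⟨x', hx', subset_rfl, heq⟩
    · have hc2 : x'.card ≤ 2 := by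
        have h1 : x'.card ≤ 3 := by
          rw [← hcard]
          exact le_trans (Finset.card_le_card hsub) (tri_card h4s m).le
        omega
      obtain ⟨m', hm1, hm2⟩ := tri_lift hn hk m hx' hsub hc2
      refine ⟨tri n (2 * k) m', Or.inr (Or.inr (tri_isNClique h4b m')), hm2, ?_⟩
      rw [proj_tri n k hn hk m', hm1]

lemma proj_down
    {x' : Finset (ZMod (n * (2 * k)) ⊕ ZMod (2 * k))}
    (hx' : x' ∈ (triLift (starGraph n (2 * k))).cells)
    {z : Finset (ZMod (n * k) ⊕ ZMod k)} (hz : z ∈ (triLift (starGraph n k)).cells)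
    (hsub : z ⊆ x'.image (starProj n k)) :
    ∃ z' ∈ (triLift (starGraph n (2 * k))).cells, z' ⊆ x' ∧
      z'.image (starProj n k) = z := by
  classical
  refine ⟨x'.filter (fun w => starProj n k w ∈ z), ?_, Finset.filter_subset _ _, ?_⟩
  · apply cell_down hx' (Finset.filter_subset _ _)
    obtain ⟨w, hw⟩ := cell_nonempty hz
    obtain ⟨w', hw', hfw⟩ := Finset.mem_image.1 (hsub hw)
    exact ⟨w', Finset.mem_filter.2 ⟨hw', by rw [hfw]; exact hw⟩⟩
  · ext p
    simp only [Finset.mem_image, Finset.mem_filter]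
    constructor
    · rintro ⟨w', ⟨hw', hfw⟩, rfl⟩
      exact hfw
    · intro hp
      obtain ⟨w', hw', hfw⟩ := Finset.mem_image.1 (hsub hp)
      exact ⟨w', ⟨hw', by rw [hfw]; exact hp⟩, hfw⟩

lemma proj_inj (hn : 1 ≤ n) (hk : 4 ≤ k)
    {x' y₁ y₂ : Finset (ZMod (n * (2 * k)) ⊕ ZMod (2 * k))}
    (hx' : x' ∈ (triLift (starGraph n (2 * k))).cells)
    (hy₁ : y₁ ∈ (triLift (starGraph n (2 * k))).cells)
    (hy₂ : y₂ ∈ (triLift (starGraph n (2 * k))).cells)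
    (hc1 : Conn (triLift (starGraph n (2 * k))) x' y₁)
    (hc2 : Conn (triLift (starGraph n (2 * k))) x' y₂)
    (him : y₁.image (starProj n k) = y₂.image (starProj n k)) : y₁ = y₂ := by
  have key : ∀ y, y ∈ (triLift (starGraph n (2 * k))).cells →
      Conn (triLift (starGraph n (2 * k))) x' y →
      ∃ w ∈ x', ∀ p ∈ y, p = w ∨ (starGraph n (2 * k)).Adj p w := by
    intro y hy hc
    rcases hc with ⟨z', hz', hxz, hyz⟩ | ⟨z', hz', hzx, hzy⟩
    · obtain ⟨w, hw⟩ := cell_nonempty hx'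
      exact ⟨w, hw, fun p hp => cell_pair hz' (hyz hp) (hxz hw)⟩
    · obtain ⟨w, hw⟩ := cell_nonempty hz'
      exact ⟨w, hzx hw, fun p hp => cell_pair hy hp (hzy hw)⟩
  obtain ⟨w₁, hw₁, hk₁⟩ := key y₁ hy₁ hc1
  obtain ⟨w₂, hw₂, hk₂⟩ := key y₂ hy₂ hc2
  have hww := cell_pair hx' hw₁ hw₂
  have main : ∀ p ∈ y₁, ∀ q ∈ y₂, starProj n k p = starProj n k q → p = q := by
    intro p hp q hq hf
    refine three_chain n k hn hk (hk₁ p hp) hww ?_ hf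
    rcases hk₂ q hq with he | ha
    · exact Or.inl he.symm
    · exact Or.inr ha.symm
  ext p
  constructor
  · intro hp
    have hmem : starProj n k p ∈ y₂.image (starProj n k) :=
      him ▸ Finset.mem_image_of_mem _ hp
    obtain ⟨q, hq, hfq⟩ := Finset.mem_image.1 hmem
    rwa [main p hp q hq hfq.symm]
  · intro hp
    have hmem : starProj n k p ∈ y₁.image (starProj n k) :=
      him.symm ▸ Finset.mem_image_of_mem _ hp
    obtain ⟨q, hq, hfq⟩ := Finset.mem_image.1 hmem
    rwa [← main q hq p hp hfq]

end StarAux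
/-- For `n ≥ 1` and `k > 3`, the map on cells induced by `a_i ↦ a'_{i mod nk}`,
`b_i ↦ b'_{i mod k}` (extended to cells by taking images of node sets) is a CC
covering of the triangular lift `3-CL(Star_{n,k})` by `3-CL(Star_{n,2k})`. -/
theorem star_triLift_covering (n k : ℕ) (hn : 1 ≤ n) (hk : 4 ≤ k) :
    IsCovering (triLift (starGraph n (2 * k))) (triLift (starGraph n k))
      (fun x => x.image (starProj n k)) := by
  apply StarAux.isCovering_of
  · intro x' hx'
    exact StarAux.proj_mem n k hn hk hx'
  · intro x hx
    exact StarAux.proj_surj_cells n k hn hk hx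
  · intro x' hx'
    exact StarAux.proj_rank n k hn hk hx'
  · intro y z h
    exact Finset.image_subset_image h
  · intro x' hx' z hz hsub
    exact StarAux.proj_up n k hn hk hx' hz hsub
  · intro x' hx' z hz hsub
    exact StarAux.proj_down n k hx' hz hsub
  · intro x' hx' y₁ hy₁ y₂ hy₂ hc1 hc2 him
    exact StarAux.proj_inj n k hn hk hx' hy₁ hy₂ hc1 hc2 him

end TDL
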